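/- Let A be a commutative unital complex Banach algebra, let (φ_n)_{n∈ℕ} be a sequence of pairwise distinct characters on A such that the set {φ_1, φ_2, …} is a compact subset of the character space of A (with the Gelfand topology), and let (λ_n)_{n∈ℕ} be a sequence of complex numbers with ∑_{n=1}^∞ |λ_n| < ∞. If for every a ∈ A one has ∑_{n=1}^∞ λ_n φ_n(a) = 0, then λ_n = 0 for all n. -/

import Mathlib

open WeakDual

section Aux

variable {A : Type*} [NormedCommRing A] [NormedAlgebra ℂ A] [CompleteSpace A]

private lemma eval_char_continuous (x : A) :
    Continuous fun ψ : characterSpace ℂ A => ψ x :=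
  (WeakDual.eval_continuous x).comp continuous_subtype_val

/-- On a countable compact Hausdorff set, there is an isolated point. -/
private lemma exists_isolated {X : Type*} [TopologicalSpace X] [T2Space X] {C : Set X}
    (hC : IsCompact C) (hct : C.Countable) (hne : C.Nonempty) :
    ∃ x ∈ C, ∃ U : Set X, IsOpen U ∧ U ∩ C = {x} := by
  have : CompactSpace C := isCompact_iff_compactSpace.1 hC
  have : Countable C := hct.to_subtype
  have hne' : Nonempty C := hne.to_subtype
  by_contra h
  push_neg at h
  have hdense : ∀ y : C, Dense ({y}ᶜ : Set C) := by
    intro y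
    rw [dense_compl_singleton_iff_not_open]
    intro hop
    rw [isOpen_induced_iff] at hop
    obtain ⟨U, hU, hUy⟩ := hop
    refine h y.1 y.2 U hU ?_
    ext w
    constructor
    · rintro ⟨hwU, hwC⟩
      have : (⟨w, hwC⟩ : C) ∈ Subtype.val ⁻¹' U := hwU
      rw [hUy] at this
      simpa using congrArg Subtype.val this
    · rintro rfl
      have : y ∈ (Subtype.val ⁻¹' U : Set C) := by rw [hUy]; rfl
      exact ⟨this, y.2⟩
  have hd : Dense (⋂ y : C, ({y}ᶜ : Set C)) :=
    dense_iInter_of_isOpen (fun y => isClosed_singleton.isOpen_compl) hdense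
  obtain ⟨p, hp⟩ := hd.nonempty
  exact (Set.mem_iInter.1 hp p) rfl

private lemma exists_good_radius {D : Set ℝ} (hD : D.Countable) {ε : ℝ} (hε : 0 < ε) :
    ∃ r : ℝ, 0 < r ∧ r < ε ∧ r ∉ D := by
  by_contra h
  push_neg at h
  have hsub : Set.Ioo (0 : ℝ) ε ⊆ D := fun r hr => h r hr.1 hr.2
  have hct : (Set.Ioo (0 : ℝ) ε).Countable := hD.mono hsub
  have h1 := hct.le_aleph0
  rw [Cardinal.mk_Ioo_real hε] at h1
  exact absurd h1 (not_le.2 Cardinal.aleph0_lt_continuum)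

/-- The key restriction lemma: if an absolutely summable linear combination of characters
vanishes, then so does its restriction to the indices `n` whose value `φ n a` lies in a
disk whose boundary circle avoids all the values `φ n a`. -/
private lemma restrict_lemma (φ : ℕ → characterSpace ℂ A)
    (hcpt : IsCompact (Set.range φ))
    (l : ℕ → ℂ) (hl : Summable fun n => ‖l n‖)
    (hzero : ∀ a : A, ∑' n, l n * φ n a = 0)
    (a : A) (c : ℂ) (r : ℝ) (hr : 0 < r)
    (hsph : ∀ n, dist (φ n a) c ≠ r) :
    ∀ b : A, ∑' n, (if dist (φ n a) c < r then l n else 0) * φ n b = 0 := by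
  classical
  -- bound on values of the characters at a fixed element
  have hbd : ∀ x : A, ∃ C : ℝ, 0 ≤ C ∧ ∀ n, ‖φ n x‖ ≤ C := by
    intro x
    obtain ⟨C, hC⟩ := isBounded_iff_forall_norm_le.1
      (hcpt.image (eval_char_continuous x)).isBounded
    exact ⟨max C 0, le_max_right _ _, fun n =>
      le_trans (hC _ ⟨φ n, Set.mem_range_self n, rfl⟩) (le_max_left _ _)⟩
  set Z : Set ℂ := Set.range fun n => φ n a with hZ
  have hZcpt : IsCompact Z := by
    have hZeq : Z = (fun ψ : characterSpace ℂ A => ψ a) '' Set.range φ := by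
      ext w
      constructor
      · rintro ⟨n, rfl⟩
        exact ⟨φ n, ⟨n, rfl⟩, rfl⟩
      · rintro ⟨ψ, ⟨n, rfl⟩, rfl⟩
        exact ⟨n, rfl⟩
    rw [hZeq]
    exact hcpt.image (eval_char_continuous a)
  have hZcl : IsClosed Z := hZcpt.isClosed
  have hZct : Z.Countable := Set.countable_range _
  have hZco : IsOpen Zᶜ := hZcl.isOpen_compl
  have hpre : IsPreconnected Zᶜ :=
    (hZct.isPathConnected_compl_of_one_lt_rank
      (by norm_num [Complex.rank_real_complex])).isConnected.isPreconnected
  -- invertibility of `w - a` for large `w`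
  have hUnit : ∀ w : ℂ, ‖a‖ < ‖w‖ → IsUnit (algebraMap ℂ A w - a) := by
    intro w hw
    have hw0 : w ≠ 0 := by
      intro hw'
      rw [hw', norm_zero] at hw
      exact (norm_nonneg a).not_gt hw
    have ht : ‖w⁻¹ • a‖ < 1 := by
      rw [norm_smul, norm_inv, ← div_eq_inv_mul]
      exact (div_lt_one (norm_pos_iff.2 hw0)).2 hw
    have h1 : IsUnit ((1 : A) - w⁻¹ • a) := (Units.oneSub _ ht).isUnit
    have h2 : algebraMap ℂ A w - a = algebraMap ℂ A w * (1 - w⁻¹ • a) := by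
      rw [mul_sub, mul_one, mul_smul_comm, ← Algebra.smul_def, smul_smul,
        inv_mul_cancel₀ hw0, one_smul]
    rw [h2]
    exact ((isUnit_iff_ne_zero.2 hw0).map (algebraMap ℂ A)).mul h1
  intro b
  obtain ⟨Cb, hCb0, hCb⟩ := hbd b
  set Gt : ℕ → ℂ → ℂ := fun n w => l n * φ n b * (w - φ n a)⁻¹ with hGt
  set G : ℂ → ℂ := fun w => ∑' n, Gt n w with hG
  -- Step 1 : G vanishes for large w
  have hGbig : ∀ w : ℂ, ‖a‖ < ‖w‖ → G w = 0 := by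
    intro w hw
    obtain ⟨u, hu⟩ := hUnit w hw
    have hinv : ∀ n, φ n ((↑u⁻¹ : Aˣ) : A) = (w - φ n a)⁻¹ := by
      intro n
      have h1 : φ n ((u : A) * ((↑u⁻¹ : Aˣ) : A)) = 1 := by
        rw [Units.mul_inv]; exact map_one (φ n)
      rw [map_mul] at h1
      have h2 : φ n (u : A) = w - φ n a := by
        rw [hu, map_sub, AlgHomClass.commutes]
        simp
      rw [h2] at h1
      exact (inv_eq_of_mul_eq_one_right h1).symm
    calc G w = ∑' n, l n * φ n (b * ((↑u⁻¹ : Aˣ) : A)) := by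
          refine tsum_congr fun n => ?_
          simp only [hG, hGt]
          rw [map_mul, hinv n, mul_assoc]
      _ = 0 := hzero _
  -- Step 2 : G is holomorphic off Z
  have hGdiff : DifferentiableOn ℂ G Zᶜ := by
    intro w₀ hw₀
    have hZne : Z.Nonempty := ⟨φ 0 a, ⟨0, rfl⟩⟩
    have hδ : 0 < Metric.infDist w₀ Z := (hZcl.notMem_iff_infDist_pos hZne).1 hw₀
    set δ := Metric.infDist w₀ Z with hδdef
    have hball : ∀ n, ∀ w ∈ Metric.ball w₀ (δ / 2), δ / 2 ≤ dist w (φ n a) := by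
      intro n w hwb
      have h1 : δ ≤ dist w₀ (φ n a) := Metric.infDist_le_dist_of_mem ⟨n, rfl⟩
      have h2 : dist w₀ w < δ / 2 := by
        rw [dist_comm]; exact Metric.mem_ball.1 hwb
      have h3 := dist_triangle w₀ w (φ n a)
      linarith
    have hb2 : ∀ (n : ℕ), ∀ w ∈ Metric.ball w₀ (δ / 2),
        ‖Gt n w‖ ≤ ‖l n‖ * (Cb * (δ / 2)⁻¹) := by
      intro n w hwb
      have h2 := hball n w hwb
      have h2' : (0 : ℝ) < δ / 2 := by linarith
      have hinv : ‖(w - φ n a)⁻¹‖ ≤ (δ / 2)⁻¹ := by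
        rw [norm_inv, ← dist_eq_norm]
        exact inv_anti₀ h2' h2
      calc ‖Gt n w‖ = ‖l n‖ * ‖φ n b‖ * ‖(w - φ n a)⁻¹‖ := by
            rw [hGt]; simp [norm_mul]
        _ ≤ ‖l n‖ * Cb * (δ / 2)⁻¹ := by
            gcongr
            · exact hCb n
        _ = ‖l n‖ * (Cb * (δ / 2)⁻¹) := by ring
    have hdo : DifferentiableOn ℂ G (Metric.ball w₀ (δ / 2)) := by
      apply Complex.differentiableOn_tsum_of_summable_norm (hl.mul_right (Cb * (δ / 2)⁻¹))
        ?_ Metric.isOpen_ball hb2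
      intro n w hwb
      have h2 := hball n w hwb
      have hne0 : w - φ n a ≠ 0 := by
        refine sub_ne_zero.2 fun h => ?_
        rw [h, dist_self] at h2
        linarith
      have hd : DifferentiableAt ℂ (fun w => l n * φ n b * (w - φ n a)⁻¹) w :=
        have h1 : DifferentiableAt ℂ (fun z => z - φ n a) w := differentiableAt_id.sub_const _
        (h1.inv hne0).const_mul _
      exact hd.differentiableWithinAt
    exact (hdo.differentiableAt (Metric.isOpen_ball.mem_nhds
      (Metric.mem_ball_self (by linarith)))).differentiableWithinAt
  -- Step 3 : G vanishes off Z, by the identity theorem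
  have hZsmall : ∀ w : ℂ, ‖a‖ < ‖w‖ → w ∉ Z := by
    rintro w hw ⟨n, rfl⟩
    exact (spectrum.mem_iff.1 (CharacterSpace.apply_mem_spectrum (φ n) a)) (hUnit _ hw)
  have hGzero : Set.EqOn G 0 Zᶜ := by
    set w₁ : ℂ := ((‖a‖ + 1 : ℝ) : ℂ) with hw₁def
    have hw₁ : ‖a‖ < ‖w₁‖ := by
      have : ‖w₁‖ = |‖a‖ + 1| := Complex.norm_real _
      rw [this, abs_of_nonneg (by positivity)]
      linarith
    have hopen : IsOpen {w : ℂ | ‖a‖ < ‖w‖} := isOpen_lt continuous_const continuous_norm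
    refine (hGdiff.analyticOnNhd hZco).eqOn_zero_of_preconnected_of_eventuallyEq_zero hpre
      (z₀ := w₁) (hZsmall w₁ hw₁) ?_
    exact Filter.eventuallyEq_of_mem (hopen.mem_nhds hw₁) fun w hw => hGbig w hw
  -- Step 4 : integrate G over the circle of radius r around c
  -- uniform distance from the circle to Z
  obtain ⟨δ, hδ0, hδ⟩ : ∃ δ : ℝ, 0 < δ ∧ ∀ w ∈ Metric.sphere c r, ∀ n, δ ≤ dist w (φ n a) := by
    have hsne : (Metric.sphere c r).Nonempty := NormedSpace.sphere_nonempty.2 hr.le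
    obtain ⟨w₂, hw₂s, hmin⟩ := (isCompact_sphere c r).exists_isMinOn hsne
      ((Metric.continuous_infDist_pt Z).continuousOn)
    have hZne : Z.Nonempty := ⟨φ 0 a, ⟨0, rfl⟩⟩
    have hw₂Z : w₂ ∉ Z := by
      rintro ⟨n, rfl⟩
      exact hsph n (Metric.mem_sphere.1 hw₂s)
    refine ⟨Metric.infDist w₂ Z, (hZcl.notMem_iff_infDist_pos hZne).1 hw₂Z, ?_⟩
    intro w hws n
    exact le_trans (hmin hws) (Metric.infDist_le_dist_of_mem ⟨n, rfl⟩)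
  have hsphZ : ∀ θ : ℝ, ∀ n, circleMap c r θ ≠ φ n a := by
    intro θ n h
    have := hδ _ (circleMap_mem_sphere c hr.le θ) n
    rw [h, dist_self] at this
    linarith
  -- the integrand as a family of continuous functions
  set g : ℕ → C(ℝ, ℂ) := fun n =>
    ⟨fun θ => circleMap 0 r θ * Complex.I * Gt n (circleMap c r θ), by
      refine ((continuous_circleMap 0 r).mul continuous_const).mul
        (continuous_const.mul (Continuous.inv₀ ((continuous_circleMap c r).sub
          continuous_const) fun θ => sub_ne_zero.2 (hsphZ θ n)))⟩ with hgdef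
  have hgbound : ∀ n θ, ‖g n θ‖ ≤ ‖l n‖ * (|r| * Cb * δ⁻¹) := by
    intro n θ
    have h1 : ‖circleMap 0 r θ * Complex.I‖ = |r| := by
      rw [norm_mul, Complex.norm_I, mul_one, norm_circleMap_zero]
    have h2 : δ ≤ dist (circleMap c r θ) (φ n a) :=
      hδ _ (circleMap_mem_sphere c hr.le θ) n
    have hinv : ‖(circleMap c r θ - φ n a)⁻¹‖ ≤ δ⁻¹ := by
      rw [norm_inv, ← dist_eq_norm]
      exact inv_anti₀ hδ0 h2
    calc ‖g n θ‖ = |r| * (‖l n‖ * ‖φ n b‖ * ‖(circleMap c r θ - φ n a)⁻¹‖) := by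
          simp only [hgdef, ContinuousMap.coe_mk, norm_mul, h1, hGt]
        _ ≤ |r| * (‖l n‖ * Cb * δ⁻¹) := by
          gcongr
          · exact hCb n
        _ = ‖l n‖ * (|r| * Cb * δ⁻¹) := by ring
  have hgsum : Summable fun n =>
      ‖(g n).restrict (⟨Set.uIcc 0 (2 * Real.pi), isCompact_uIcc⟩ : TopologicalSpace.Compacts ℝ)‖ := by
    refine Summable.of_nonneg_of_le (fun n => norm_nonneg _) (fun n => ?_)
      (hl.mul_right (|r| * Cb * δ⁻¹))
    refine (ContinuousMap.norm_le _ ?_).2 fun θ => hgbound n θ.1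
    have : 0 ≤ |r| * Cb * δ⁻¹ := by positivity
    positivity
  have HS := intervalIntegral.hasSum_intervalIntegral_of_summable_norm
    (a := (0 : ℝ)) (b := 2 * Real.pi) hgsum
  -- the limit integral vanishes
  have htsum0 : ∀ θ : ℝ, ∑' n, g n θ = 0 := by
    intro θ
    have hmem : circleMap c r θ ∈ Zᶜ := by
      rintro ⟨n, hn⟩
      exact hsphZ θ n hn.symm
    calc ∑' n, g n θ = circleMap 0 r θ * Complex.I * G (circleMap c r θ) := by
          rw [hG]; exact tsum_mul_left
      _ = 0 := by rw [hGzero hmem]; simp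
  have hI0 : (∫ θ in (0 : ℝ)..2 * Real.pi, ∑' n, g n θ) = 0 := by
    simp [htsum0]
  -- compute each term's integral
  have hterm : ∀ n, (∫ θ in (0 : ℝ)..2 * Real.pi, g n θ)
      = (2 * Real.pi * Complex.I) * ((if dist (φ n a) c < r then l n else 0) * φ n b) := by
    intro n
    have h1 : (∫ θ in (0 : ℝ)..2 * Real.pi, g n θ)
        = ∮ w in C(c, r), l n * φ n b * (w - φ n a)⁻¹ := by
      rw [circleIntegral]
      refine intervalIntegral.integral_congr fun θ _ => ?_
      simp only [hgdef, ContinuousMap.coe_mk, deriv_circleMap, smul_eq_mul, hGt]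
    have h2 : (∮ w in C(c, r), l n * φ n b * (w - φ n a)⁻¹)
        = l n * φ n b * ∮ w in C(c, r), (w - φ n a)⁻¹ :=
      circleIntegral.integral_const_mul _ _ _ _
    by_cases hcase : dist (φ n a) c < r
    · have h3 : (∮ w in C(c, r), (w - φ n a)⁻¹) = 2 * Real.pi * Complex.I :=
        circleIntegral.integral_sub_inv_of_mem_ball (Metric.mem_ball.2 hcase)
      rw [h1, h2, h3, if_pos hcase]
      ring
    · have hout : r < dist (φ n a) c := lt_of_le_of_ne (not_lt.1 hcase) (Ne.symm (hsph n))
      have hne' : ∀ w ∈ Metric.closedBall c r, w - φ n a ≠ 0 := by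
        intro w hw
        refine sub_ne_zero.2 fun h => ?_
        rw [h] at hw
        exact absurd (Metric.mem_closedBall.1 hw) (not_le.2 hout)
      have h3 : (∮ w in C(c, r), (w - φ n a)⁻¹) = 0 := by
        refine Complex.circleIntegral_eq_zero_of_differentiable_on_off_countable hr.le
          Set.countable_empty ?_ ?_
        · exact ContinuousOn.inv₀ ((continuous_id.sub continuous_const).continuousOn) hne'
        · intro w hw
          exact (differentiableAt_id.sub_const _).inv
            (hne' w (Metric.ball_subset_closedBall hw.1))
      rw [h1, h2, h3, if_neg hcase]
      ring
    -- done with hterm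
  have HS2 : HasSum (fun n =>
      (2 * Real.pi * Complex.I) * ((if dist (φ n a) c < r then l n else 0) * φ n b)) 0 := by
    rw [hI0] at HS
    exact HS.congr_fun fun n => (hterm n).symm
  have HS3 := HS2.mul_left ((2 * Real.pi * Complex.I : ℂ))⁻¹
  rw [mul_zero] at HS3
  have HS4 : HasSum (fun n => (if dist (φ n a) c < r then l n else 0) * φ n b) 0 := by
    refine HS3.congr_fun fun n => ?_
    rw [← mul_assoc, inv_mul_cancel₀ Complex.two_pi_I_ne_zero, one_mul]
  exact HS4.tsum_eq

private lemma iterate_restrict (φ : ℕ → characterSpace ℂ A)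
    (hcpt : IsCompact (Set.range φ)) (m : ℕ)
    {ι : Type*} (aa : ι → A) (ε : ι → ℝ) :
    ∀ t : Finset ι, (∀ i ∈ t, 0 < ε i) →
    ∀ l : ℕ → ℂ, (Summable fun n => ‖l n‖) → (∀ b : A, ∑' n, l n * φ n b = 0) →
    ∃ l' : ℕ → ℂ, (Summable fun n => ‖l' n‖) ∧ (∀ b : A, ∑' n, l' n * φ n b = 0) ∧
      l' m = l m ∧
      ∀ n, l' n ≠ 0 → l n ≠ 0 ∧ ∀ i ∈ t, dist (φ n (aa i)) (φ m (aa i)) < ε i := by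
  classical
  intro t
  induction t using Finset.induction_on with
  | empty =>
      intro _ l hl hz
      exact ⟨l, hl, hz, rfl, fun n hn => ⟨hn, fun i hi => absurd hi (Finset.notMem_empty i)⟩⟩
  | @insert i t hi IH =>
      intro hε l hl hz
      obtain ⟨l₁, hl₁, hz₁, hm₁, hsupp₁⟩ :=
        IH (fun j hj => hε j (Finset.mem_insert_of_mem hj)) l hl hz
      have hεi : 0 < ε i := hε i (Finset.mem_insert_self i t)
      obtain ⟨r, hr0, hrε, hrD⟩ := exists_good_radius
        (Set.countable_range fun n => dist (φ n (aa i)) (φ m (aa i))) hεi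
      have hz₂ := restrict_lemma φ hcpt l₁ hl₁ hz₁ (aa i) (φ m (aa i)) r hr0
        (fun n h => hrD ⟨n, h⟩)
      set l₂ : ℕ → ℂ := fun n => if dist (φ n (aa i)) (φ m (aa i)) < r then l₁ n else 0
        with hl₂def
      have hl₂n : ∀ n, l₂ n = if dist (φ n (aa i)) (φ m (aa i)) < r then l₁ n else 0 :=
        fun n => rfl
      refine ⟨l₂, ?_, hz₂, ?_, ?_⟩
      · refine Summable.of_nonneg_of_le (fun n => norm_nonneg _) (fun n => ?_) hl₁
        rw [hl₂n n]
        by_cases h : dist (φ n (aa i)) (φ m (aa i)) < r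
        · simp [h]
        · simp [h]
      · rw [hl₂n m, if_pos (by simpa [dist_self] using hr0), hm₁]
      · intro n hn
        rw [hl₂n n] at hn
        by_cases h : dist (φ n (aa i)) (φ m (aa i)) < r
        · rw [if_pos h] at hn
          obtain ⟨h3, h4⟩ := hsupp₁ n hn
          refine ⟨h3, fun j hj => ?_⟩
          rcases Finset.mem_insert.1 hj with rfl | hj'
          · exact h.trans hrε
          · exact h4 j hj'
        · rw [if_neg h] at hn
          exact absurd rfl hn

end Aux

/-- If `A` is a commutative unital complex Banach algebra, `(φ n)` a sequence of pairwise
distinct characters on `A` whose range is a compact subset of the character space, and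
`(l n)` is absolutely summable with `∑' n, l n * φ n a = 0` for all `a`, then all `l n`
vanish. -/
theorem countable_lin_comb_characters_eq_zero_of_compact
    {A : Type*} [NormedCommRing A] [NormedAlgebra ℂ A] [CompleteSpace A]
    (φ : ℕ → characterSpace ℂ A) (hφ : Function.Injective φ)
    (hcpt : IsCompact (Set.range φ))
    (l : ℕ → ℂ) (hl : Summable fun n => ‖l n‖)
    (hzero : ∀ a : A, ∑' n, l n * φ n a = 0) :
    ∀ n, l n = 0 := by
  classical
  intro n₀
  by_contra hn₀
  set S : Set ℕ := {n | l n ≠ 0} with hS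
  set C : Set (characterSpace ℂ A) := closure (φ '' S) with hC
  have hCsub : C ⊆ Set.range φ :=
    closure_minimal (Set.image_subset_range φ S) hcpt.isClosed
  have hCcpt : IsCompact C := hcpt.of_isClosed_subset isClosed_closure hCsub
  have hCct : C.Countable := (Set.countable_range φ).mono hCsub
  have hCne : C.Nonempty := ⟨φ n₀, subset_closure ⟨n₀, hn₀, rfl⟩⟩
  obtain ⟨x, hxC, U, hU, hUC⟩ := exists_isolated hCcpt hCct hCne
  have hxU : x ∈ U := by
    have h1 : x ∈ ({x} : Set (characterSpace ℂ A)) := rfl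
    rw [← hUC] at h1
    exact h1.1
  obtain ⟨y, hyU, hyS⟩ := mem_closure_iff.1 hxC U hU hxU
  have hyC : y ∈ C := subset_closure hyS
  have hyx : y = x := by
    have hy2 : y ∈ U ∩ C := ⟨hyU, hyC⟩
    rw [hUC] at hy2
    exact hy2
  obtain ⟨m, hmS, hmx⟩ := hyS
  have hxm : φ m = x := hmx.trans hyx
  set K : Set (characterSpace ℂ A) := C \ U with hK
  have hKcpt : IsCompact K := hCcpt.diff hU
  have hKx : ∀ ψ : characterSpace ℂ A, ψ ∈ C → ψ ≠ x → ψ ∈ K := by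
    intro ψ hψC hψx
    refine ⟨hψC, fun hψU => hψx ?_⟩
    have hψ2 : ψ ∈ U ∩ C := ⟨hψU, hψC⟩
    rw [hUC] at hψ2
    exact hψ2
  have hsep : ∀ ψ : K, ∃ a : A, (ψ : characterSpace ℂ A) a ≠ x a := by
    intro ψ
    by_contra h
    push_neg at h
    have hψx : (ψ : characterSpace ℂ A) = x := CharacterSpace.ext h
    exact ψ.2.2 (by rw [hψx]; exact hxU)
  choose aa ha using hsep
  set ε : K → ℝ := fun ψ => dist ((ψ : characterSpace ℂ A) (aa ψ)) (x (aa ψ)) / 2 with hε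
  have hεpos : ∀ ψ : K, 0 < ε ψ := by
    intro ψ
    have h1 : 0 < dist ((ψ : characterSpace ℂ A) (aa ψ)) (x (aa ψ)) := dist_pos.2 (ha ψ)
    simp only [hε]
    linarith
  set V : K → Set (characterSpace ℂ A) := fun ψ => {χ | ε ψ < dist (χ (aa ψ)) (x (aa ψ))}
    with hV
  have hVopen : ∀ ψ, IsOpen (V ψ) :=
    fun ψ => isOpen_lt continuous_const ((eval_char_continuous (aa ψ)).dist continuous_const)
  have hcover : K ⊆ ⋃ ψ : K, V ψ := by
    intro χ hχ
    refine Set.mem_iUnion.2 ⟨⟨χ, hχ⟩, ?_⟩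
    exact half_lt_self (dist_pos.2 (ha ⟨χ, hχ⟩))
  obtain ⟨t, ht⟩ := hKcpt.elim_finite_subcover V hVopen hcover
  obtain ⟨l', hl', hz', hm', hsupp'⟩ :=
    iterate_restrict φ hcpt m aa ε t (fun i _ => hεpos i) l hl hzero
  have hker : ∀ n, n ≠ m → l' n = 0 := by
    intro n hnm
    by_contra hn
    obtain ⟨hln, hclose⟩ := hsupp' n hn
    have hφnC : φ n ∈ C := subset_closure ⟨n, hln, rfl⟩
    have hφnx : φ n ≠ x := by
      rw [← hxm]
      exact fun h => hnm (hφ h)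
    have hφnK : φ n ∈ K := hKx _ hφnC hφnx
    obtain ⟨ψ, hψ⟩ := Set.mem_iUnion.1 (ht hφnK)
    obtain ⟨hψt, hψV⟩ := Set.mem_iUnion.1 hψ
    have h2 := hclose ψ hψt
    have h3 : ε ψ < dist (φ n (aa ψ)) (x (aa ψ)) := hψV
    rw [← hxm] at h3
    linarith
  have h1 : ∑' n, l' n * φ n (1 : A) = 0 := hz' 1
  have h2 : ∑' n, l' n * φ n (1 : A) = l' m * φ m (1 : A) :=
    tsum_eq_single m fun n hnm => by rw [hker n hnm, zero_mul]
  rw [h2, map_one, mul_one, hm'] at h1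
  exact hmS h1
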